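/- Suppose a binary channel maps input bit b to an output whose distributions under b=0 and b=1 have total variation distance at most δ. Then any estimator, from n independent outputs of the channel applied to bits b_1,...,b_n, of the sum S = Σ b_i must have worst-case expected error Ω(min(n, 1/δ) ) up to constants; in particular, if δ = c/√T then the expected error is Ω(√T/c) whenever √T/c ≤ n. -/

import Mathlib

open Finset

private lemma lecam_sum_prod_one (O : Type) [Fintype O] (n : ℕ) (p : Fin n → O → ℝ)
    (hp1 : ∀ i, ∑ o, p i o = 1) : ∑ o : Fin n → O, ∏ i, p i (o i) = 1 := by
  rw [← Fintype.piFinset_univ, ← Finset.prod_univ_sum]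
  simp [hp1]

private lemma lecam_tv_prod (O : Type) [Fintype O] :
    ∀ (n : ℕ) (p q : Fin n → O → ℝ),
    (∀ i o, 0 ≤ p i o) → (∀ i o, 0 ≤ q i o) →
    (∀ i, ∑ o, p i o = 1) → (∀ i, ∑ o, q i o = 1) →
    ∑ o : Fin n → O, |(∏ i, p i (o i)) - ∏ i, q i (o i)| ≤ ∑ i, ∑ x, |p i x - q i x| := by
  intro n
  induction n with
  | zero => intro p q _ _ _ _; simp
  | succ n ih =>
    intro p q hp0 hq0 hp1 hq1
    have key := ih (fun i => p i.succ) (fun i => q i.succ) (fun i o => hp0 _ o)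
      (fun i o => hq0 _ o) (fun i => hp1 _) (fun i => hq1 _)
    have hQ1 : ∑ g : Fin n → O, ∏ i : Fin n, q i.succ (g i) = 1 :=
      lecam_sum_prod_one O n (fun i => q i.succ) (fun i => hq1 _)
    have hsum : ∑ o : Fin (n+1) → O, |(∏ i, p i (o i)) - ∏ i, q i (o i)|
        = ∑ x : O, ∑ g : Fin n → O,
          |p 0 x * ∏ i : Fin n, p i.succ (g i) - q 0 x * ∏ i : Fin n, q i.succ (g i)| := by
      calc ∑ o : Fin (n+1) → O, |(∏ i, p i (o i)) - ∏ i, q i (o i)|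
          = ∑ y : O × (Fin n → O),
            |p 0 y.1 * ∏ i : Fin n, p i.succ (y.2 i) - q 0 y.1 * ∏ i : Fin n, q i.succ (y.2 i)| := by
            apply Fintype.sum_equiv (Fin.consEquiv (fun _ => O)).symm
            intro o
            simp [Fin.prod_univ_succ, Fin.consEquiv, Fin.tail]
        _ = _ := Fintype.sum_prod_type _
    rw [hsum]
    have step : ∀ x : O, ∀ g : Fin n → O,
        |p 0 x * ∏ i : Fin n, p i.succ (g i) - q 0 x * ∏ i : Fin n, q i.succ (g i)|
        ≤ p 0 x * |(∏ i : Fin n, p i.succ (g i)) - ∏ i : Fin n, q i.succ (g i)|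
          + |p 0 x - q 0 x| * ∏ i : Fin n, q i.succ (g i) := by
      intro x g
      have : p 0 x * ∏ i : Fin n, p i.succ (g i) - q 0 x * ∏ i : Fin n, q i.succ (g i)
          = p 0 x * ((∏ i : Fin n, p i.succ (g i)) - ∏ i : Fin n, q i.succ (g i))
            + (p 0 x - q 0 x) * ∏ i : Fin n, q i.succ (g i) := by ring
      rw [this]
      refine (abs_add_le _ _).trans ?_
      rw [abs_mul, abs_mul, abs_of_nonneg (hp0 0 x),
        abs_of_nonneg (Finset.prod_nonneg fun i _ => hq0 i.succ (g i))]
    calc ∑ x : O, ∑ g : Fin n → O,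
          |p 0 x * ∏ i : Fin n, p i.succ (g i) - q 0 x * ∏ i : Fin n, q i.succ (g i)|
        ≤ ∑ x : O, ∑ g : Fin n → O,
          (p 0 x * |(∏ i : Fin n, p i.succ (g i)) - ∏ i : Fin n, q i.succ (g i)|
            + |p 0 x - q 0 x| * ∏ i : Fin n, q i.succ (g i)) :=
          Finset.sum_le_sum fun x _ => Finset.sum_le_sum fun g _ => step x g
      _ = (∑ x : O, p 0 x) * (∑ g : Fin n → O,
            |(∏ i : Fin n, p i.succ (g i)) - ∏ i : Fin n, q i.succ (g i)|)
          + (∑ x : O, |p 0 x - q 0 x|) * ∑ g : Fin n → O, ∏ i : Fin n, q i.succ (g i) := by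
          simp only [Finset.sum_add_distrib, Finset.sum_mul, Finset.mul_sum]
          congr 1 <;> exact Finset.sum_comm
      _ ≤ 1 * (∑ i : Fin n, ∑ x : O, |p i.succ x - q i.succ x|) + (∑ x : O, |p 0 x - q 0 x|) * 1 := by
          rw [hp1 0, hQ1]
          simp only [one_mul, mul_one]
          exact add_le_add_left key _
      _ = ∑ i : Fin (n+1), ∑ x : O, |p i x - q i x| := by
          rw [Fin.sum_univ_succ]; ring

theorem stmt17 :
    ∃ c0 : ℝ, 0 < c0 ∧
      ∀ (n : ℕ) (O : Type) (_ : Fintype O) (K : Bool → O → ℝ) (δ : ℝ),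
        (∀ b o, 0 ≤ K b o) → (∀ b, ∑ o, K b o = 1) →
        0 ≤ δ → δ ≤ 1 / 2 →
        ((1 / 2) * ∑ o, |K true o - K false o| ≤ δ) →
        ∀ est : (Fin n → O) → ℝ,
          ∃ b : Fin n → Bool,
            c0 * min (n : ℝ) (1 / δ) ≤
              ∑ o : Fin n → O, (∏ i, K (b i) (o i)) *
                |est o - ∑ i, (if b i then (1 : ℝ) else 0)| := by
  refine ⟨1/16, by norm_num, ?_⟩
  intro n O _ K δ hK0 hK1 hδ0 hδh hTV est
  set k : ℕ := ⌊1/(2*δ)⌋₊ with hk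
  set m : ℕ := min n k with hm
  have hmn : m ≤ n := Nat.min_le_left _ _
  have hmk : m ≤ k := Nat.min_le_right _ _
  -- the two hypothesis vectors
  set b1 : Fin n → Bool := fun i => decide ((i : ℕ) < m) with hb1
  set P : (Fin n → O) → ℝ := fun o => ∏ i, K false (o i) with hP
  set Q : (Fin n → O) → ℝ := fun o => ∏ i, K (b1 i) (o i) with hQdef
  have hP0 : ∀ o, 0 ≤ P o := fun o => Finset.prod_nonneg fun i _ => hK0 _ _
  have hQ0 : ∀ o, 0 ≤ Q o := fun o => Finset.prod_nonneg fun i _ => hK0 _ _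
  have hP1 : ∑ o : Fin n → O, P o = 1 :=
    lecam_sum_prod_one O n (fun _ => K false) (fun _ => hK1 false)
  have hQ1 : ∑ o : Fin n → O, Q o = 1 :=
    lecam_sum_prod_one O n (fun i => K (b1 i)) (fun i => hK1 _)
  -- m δ ≤ 1/2
  have hmδ : (m : ℝ) * δ ≤ 1/2 := by
    rcases eq_or_lt_of_le hδ0 with h0 | h0
    · rw [← h0]; norm_num
    · have h1 : (m : ℝ) ≤ (k : ℝ) := by exact_mod_cast hmk
      have h2 : (k : ℝ) ≤ 1/(2*δ) := Nat.floor_le (by positivity)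
      have h3 : (m : ℝ) ≤ 1/(2*δ) := h1.trans h2
      calc (m : ℝ) * δ ≤ (1/(2*δ)) * δ := by nlinarith
        _ = 1/2 := by field_simp
  -- indicator sum
  have hind : ∑ i : Fin n, (if (i : ℕ) < m then (1:ℝ) else 0) = m := by
    rw [Fin.sum_univ_eq_sum_range (fun i => if i < m then (1:ℝ) else 0), ← Finset.sum_filter]
    have : (range n).filter (· < m) = range m := by ext a; simp; omega
    simp [this]
  -- TV bound between product measures
  have hTVp : ∑ o : Fin n → O, |Q o - P o| ≤ (m : ℝ) * (2*δ) := by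
    have h := lecam_tv_prod O n (fun i => K (b1 i)) (fun _ => K false)
      (fun i o => hK0 _ _) (fun i o => hK0 _ _) (fun i => hK1 _) (fun i => hK1 _)
    refine h.trans ?_
    have hT : ∑ x, |K true x - K false x| ≤ 2*δ := by linarith
    calc ∑ i : Fin n, ∑ x, |K (b1 i) x - K false x|
        = ∑ i : Fin n, (if (i : ℕ) < m then (1:ℝ) else 0) * ∑ x, |K true x - K false x| := by
          refine Finset.sum_congr rfl fun i _ => ?_
          by_cases hi : (i : ℕ) < m <;> simp [hb1, hi, sub_self, abs_zero]
      _ = (m : ℝ) * ∑ x, |K true x - K false x| := by rw [← Finset.sum_mul, hind]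
      _ ≤ (m : ℝ) * (2*δ) := by
          have : (0:ℝ) ≤ (m:ℝ) := Nat.cast_nonneg m
          nlinarith
  -- sum of min
  have hmin : (1 : ℝ) - (1/2) * ∑ o : Fin n → O, |Q o - P o|
      ≤ ∑ o : Fin n → O, min (P o) (Q o) := by
    have hpt : ∀ o : Fin n → O, min (P o) (Q o) = (P o + Q o - |Q o - P o|) / 2 := by
      intro o
      rcases le_total (P o) (Q o) with h | h
      · rw [min_eq_left h, abs_of_nonneg (by linarith)]; ring
      · rw [min_eq_right h, abs_of_nonpos (by linarith)]; ring
    rw [Finset.sum_congr rfl fun o _ => hpt o]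
    rw [← Finset.sum_div, Finset.sum_sub_distrib, Finset.sum_add_distrib, hP1, hQ1]
    ring_nf
    linarith [le_refl (∑ o : Fin n → O, |Q o - P o|)]
  -- Le Cam two-point bound
  set A : ℝ := ∑ o : Fin n → O, P o * |est o - 0| with hA
  set B : ℝ := ∑ o : Fin n → O, Q o * |est o - (m : ℝ)| with hB
  have hcore : (m : ℝ) / 2 ≤ A + B := by
    have h1 : (m : ℝ) * ∑ o : Fin n → O, min (P o) (Q o) ≤ A + B := by
      rw [Finset.mul_sum, hA, hB, ← Finset.sum_add_distrib]
      refine Finset.sum_le_sum fun o _ => ?_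
      have htri : (m : ℝ) ≤ |est o - 0| + |est o - (m : ℝ)| := by
        have : (m : ℝ) = (est o - 0) - (est o - (m : ℝ)) := by ring
        calc (m : ℝ) ≤ |(est o - 0) - (est o - (m : ℝ))| := by rw [← this]; exact le_abs_self _
          _ ≤ |est o - 0| + |est o - (m : ℝ)| := abs_sub _ _
      have hm0 : 0 ≤ min (P o) (Q o) := le_min (hP0 o) (hQ0 o)
      calc (m : ℝ) * min (P o) (Q o)
          ≤ (|est o - 0| + |est o - (m : ℝ)|) * min (P o) (Q o) := by
            exact mul_le_mul_of_nonneg_right htri hm0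
        _ = min (P o) (Q o) * |est o - 0| + min (P o) (Q o) * |est o - (m : ℝ)| := by ring
        _ ≤ P o * |est o - 0| + Q o * |est o - (m : ℝ)| :=
            add_le_add (mul_le_mul_of_nonneg_right (min_le_left _ _) (abs_nonneg _))
              (mul_le_mul_of_nonneg_right (min_le_right _ _) (abs_nonneg _))
    have h2 : (m : ℝ) * (1 - (1/2) * ∑ o : Fin n → O, |Q o - P o|)
        ≤ (m : ℝ) * ∑ o : Fin n → O, min (P o) (Q o) :=
      mul_le_mul_of_nonneg_left hmin (Nat.cast_nonneg m)
    have h3 : (m : ℝ) / 2 ≤ (m : ℝ) * (1 - (1/2) * ∑ o : Fin n → O, |Q o - P o|) := by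
      have hm0 : (0:ℝ) ≤ (m:ℝ) := Nat.cast_nonneg m
      nlinarith [hTVp, hmδ]
    linarith
  -- final: (1/4) min(n, 1/δ) ≤ m
  have hfinal : (1/4 : ℝ) * min (n : ℝ) (1/δ) ≤ (m : ℝ) := by
    rcases eq_or_lt_of_le hδ0 with h0 | h0
    · rw [← h0]
      have h00 : (1:ℝ)/(0:ℝ) = 0 := by norm_num
      rw [h00, min_eq_right (Nat.cast_nonneg n), mul_zero]
      exact Nat.cast_nonneg m
    · have hx1 : (1:ℝ) ≤ 1/(2*δ) := by
        rw [le_div_iff₀ (by linarith)]; linarith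
      have hk4 : 1/(4*δ) ≤ (k : ℝ) := by
        rcases le_or_gt 2 (1/(2*δ)) with h2 | h2
        · have := Nat.sub_one_lt_floor (1/(2*δ))
          have : 1/(2*δ) - 1 ≤ (k : ℝ) := le_of_lt this
          have heq : 1/(4*δ) = (1/(2*δ))/2 := by ring
          rw [heq]
          linarith
        · have hk1 : 1 ≤ k := Nat.le_floor (by exact_mod_cast hx1)
          have : (1:ℝ) ≤ (k:ℝ) := by exact_mod_cast hk1
          have heq : 1/(4*δ) = (1/(2*δ))/2 := by ring
          rw [heq]
          linarith
      rw [hm, Nat.cast_min]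
      refine le_min ?_ ?_
      · have h1 : min (n : ℝ) (1/δ) ≤ (n : ℝ) := min_le_left _ _
        have hn0 : (0:ℝ) ≤ (n:ℝ) := Nat.cast_nonneg n
        nlinarith [Nat.cast_nonneg (α := ℝ) n]
      · have h1 : min (n : ℝ) (1/δ) ≤ 1/δ := min_le_right _ _
        have : (1/4:ℝ) * (1/δ) = 1/(4*δ) := by ring
        nlinarith
  -- conclude
  rcases le_or_gt ((m:ℝ)/4) A with hA4 | hA4
  · refine ⟨fun _ => false, ?_⟩
    have hS : ∑ i : Fin n, (if (false : Bool) then (1:ℝ) else 0) = 0 := by simp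
    calc (1/16 : ℝ) * min (n : ℝ) (1/δ) ≤ (m : ℝ)/4 := by linarith
      _ ≤ A := hA4
      _ = ∑ o : Fin n → O, (∏ i, K false (o i)) *
            |est o - ∑ i : Fin n, (if (false : Bool) then (1:ℝ) else 0)| := by
          rw [hA]; refine Finset.sum_congr rfl fun o _ => ?_; rw [hS, hP]
  · have hB4 : (m:ℝ)/4 ≤ B := by linarith
    refine ⟨b1, ?_⟩
    have hS : ∑ i : Fin n, (if b1 i then (1:ℝ) else 0) = (m : ℝ) := by
      rw [← hind]
      refine Finset.sum_congr rfl fun i _ => ?_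
      simp [hb1]
    calc (1/16 : ℝ) * min (n : ℝ) (1/δ) ≤ (m : ℝ)/4 := by linarith
      _ ≤ B := hB4
      _ = _ := by
          rw [hB]; refine Finset.sum_congr rfl fun o _ => ?_; rw [hS, hQdef]
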